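/- arXiv:0805.0967 — 4 statements merged into one kernel-verified Lean document; each statement's English description precedes it below -/
import Mathlib

section
/- Let f_n : ℝ → [0,∞) be continuous functions and let f : ℝ → [0,∞) be continuous with f(0) = 0 and f(x) → ∞ as x → +∞ and as x → −∞. Assume that 1 is not a local maximum of f and that the Lebesgue measure of {x ∈ ℝ : f(x) = 1} is zero. Set A = {x ∈ ℝ : f(x) < 1} and A_n = {x ∈ ℝ : f_n(x) < 1}. If f_n converges to f uniformly on compacts, then for every natural number k ≥ 1 the Hausdorff distance between the nonempty compact sets (A_n ∩ (−k,k))ᶜ ∩ [−k,k] and (A ∩ (−k,k))ᶜ ∩ [−k,k] converges to 0 as n → ∞ (where Sᶜ denotes the complement of S in ℝ). -/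
open Filter MeasureTheory Metric Set Topology

theorem stmt0
    (f : ℝ → ℝ) (fn : ℕ → ℝ → ℝ)
    (hf_cont : Continuous f) (hf_nonneg : ∀ x, 0 ≤ f x)
    (hfn_cont : ∀ n, Continuous (fn n)) (hfn_nonneg : ∀ n x, 0 ≤ fn n x)
    (hf0 : f 0 = 0)
    (htop : Tendsto f atTop atTop) (hbot : Tendsto f atBot atTop)
    (hnotmax : ¬ ∃ (s ε : ℝ), 0 < ε ∧ f s = 1 ∧ ∀ t ∈ Icc (s - ε) (s + ε), f t ≤ 1)
    (hleb : volume {x : ℝ | f x = 1} = 0)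
    (hunif : ∀ K : Set ℝ, IsCompact K → TendstoUniformlyOn fn f atTop K) :
    ∀ k : ℕ, 1 ≤ k →
      Tendsto (fun n =>
        hausdorffDist
          (({x : ℝ | fn n x < 1} ∩ Ioo (-(k : ℝ)) k)ᶜ ∩ Icc (-(k : ℝ)) k)
          (({x : ℝ | f x < 1} ∩ Ioo (-(k : ℝ)) k)ᶜ ∩ Icc (-(k : ℝ)) k))
        atTop (nhds 0) := by
  classical
  intro k hk
  have hk0 : (0:ℝ) < k := by exact_mod_cast Nat.lt_of_lt_of_le Nat.zero_lt_one hk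
  have hkk : -(k:ℝ) < k := by linarith
  have memB : ∀ (g : ℝ → ℝ) (x : ℝ),
      x ∈ (({x : ℝ | g x < 1} ∩ Ioo (-(k:ℝ)) k)ᶜ ∩ Icc (-(k:ℝ)) k) ↔
      (x ∈ Icc (-(k:ℝ)) k ∧ (1 ≤ g x ∨ x ∉ Ioo (-(k:ℝ)) k)) := by
    intro g x
    simp only [mem_inter_iff, mem_compl_iff, mem_setOf_eq, not_and_or, not_lt]
    tauto
  set B := (({x : ℝ | f x < 1} ∩ Ioo (-(k:ℝ)) k)ᶜ ∩ Icc (-(k:ℝ)) k) with hBdef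
  have h_k_B : (k:ℝ) ∈ B := (memB f k).2 ⟨⟨by linarith, le_refl _⟩,
    Or.inr (fun h => lt_irrefl _ h.2)⟩
  have h_nk_B : -(k:ℝ) ∈ B := (memB f (-(k:ℝ))).2 ⟨⟨le_refl _, by linarith⟩,
    Or.inr (fun h => lt_irrefl _ h.1)⟩
  have hBK : B ⊆ Icc (-(k:ℝ)) k := fun x hx => ((memB f x).1 hx).1
  have hBclosed : IsClosed B :=
    ((IsOpen.isClosed_compl ((isOpen_lt hf_cont continuous_const).inter isOpen_Ioo))).inter
      isClosed_Icc
  have hBcompact : IsCompact B := isCompact_Icc.of_isClosed_subset hBclosed hBK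
  rw [Metric.tendsto_nhds]
  intro ε hε
  set r := ε / 2 with hrdef
  have hr : 0 < r := by positivity
  -- Direction 1 preparation: points of Icc far from B have f < 1 - δ₁
  set C := {x : ℝ | x ∈ Icc (-(k:ℝ)) k ∧ r ≤ infDist x B} with hCdef
  have hCclosed : IsClosed C := by
    have : C = Icc (-(k:ℝ)) k ∩ {x : ℝ | r ≤ infDist x B} := rfl
    rw [this]
    exact isClosed_Icc.inter (isClosed_le continuous_const (continuous_infDist_pt B))
  have hCcomp : IsCompact C := isCompact_Icc.of_isClosed_subset hCclosed (fun x hx => hx.1)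
  have hCf : ∀ x ∈ C, f x < 1 := by
    intro x hx
    by_contra h
    push_neg at h
    have hxB : x ∈ B := (memB f x).2 ⟨hx.1, Or.inl h⟩
    have h0 : infDist x B = 0 := infDist_zero_of_mem hxB
    linarith [hx.2]
  have key1 : ∃ δ > 0, ∀ x ∈ C, f x ≤ 1 - δ := by
    rcases C.eq_empty_or_nonempty with hCe | hCne
    · exact ⟨1, one_pos, fun x hx => absurd (hCe ▸ hx) (notMem_empty x)⟩
    · obtain ⟨x0, hx0, hmax⟩ := hCcomp.exists_isMaxOn hCne hf_cont.continuousOn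
      refine ⟨1 - f x0, by linarith [hCf x0 hx0], fun x hx => ?_⟩
      have hle' : f x ≤ f x0 := hmax hx
      linarith
  obtain ⟨δ₁, hδ₁, hCle⟩ := key1
  -- Direction 2 preparation: cover B by balls around points with f > 1 or endpoints
  set Y := {y : ℝ | y ∈ Icc (-(k:ℝ)) k ∧ (1 < f y ∨ y = -(k:ℝ) ∨ y = k)} with hYdef
  have hcover : B ⊆ ⋃ y ∈ Y, ball y r := by
    intro x hx
    obtain ⟨hxK, hxcase⟩ := (memB f x).1 hx
    suffices h : ∃ y ∈ Y, dist x y < r by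
      obtain ⟨y, hyY, hyd⟩ := h
      exact mem_biUnion hyY (mem_ball.2 hyd)
    rcases hxcase with hfx | hxIoo
    · rcases eq_or_lt_of_le hfx with heq | hlt
      · -- f x = 1 : use the no-local-max hypothesis
        have h2 : ¬ ∀ t ∈ Icc (x - r/2) (x + r/2), f t ≤ 1 := fun hall =>
          hnotmax ⟨x, r/2, by linarith, heq.symm, hall⟩
        push_neg at h2
        obtain ⟨t, htmem, ht⟩ := h2
        by_cases htK : t ∈ Icc (-(k:ℝ)) k
        · refine ⟨t, ⟨htK, Or.inl ht⟩, ?_⟩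
          rw [Real.dist_eq]
          rw [abs_lt]
          constructor <;> [skip; skip] <;>
            [linarith [htmem.2]; linarith [htmem.1]]
        · simp only [mem_Icc, not_and_or, not_le] at htK
          rcases htK with htl | htr
          · refine ⟨-(k:ℝ), ⟨⟨le_refl _, by linarith⟩, Or.inr (Or.inl rfl)⟩, ?_⟩
            rw [Real.dist_eq, abs_lt]
            constructor <;> [linarith [hxK.1]; linarith [htmem.1, hxK.1]]
          · refine ⟨(k:ℝ), ⟨⟨by linarith, le_refl _⟩, Or.inr (Or.inr rfl)⟩, ?_⟩
            rw [Real.dist_eq, abs_lt]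
            constructor <;> [linarith [htmem.2, hxK.2]; linarith [hxK.2]]
      · exact ⟨x, ⟨hxK, Or.inl hlt⟩, by simpa using hr⟩
    · -- x is an endpoint
      have hend : x = -(k:ℝ) ∨ x = k := by
        rcases eq_or_lt_of_le hxK.1 with h1 | h1
        · exact Or.inl h1.symm
        · rcases eq_or_lt_of_le hxK.2 with h2 | h2
          · exact Or.inr h2
          · exact absurd ⟨h1, h2⟩ hxIoo
      exact ⟨x, ⟨hxK, Or.inr hend⟩, by simpa using hr⟩
  obtain ⟨b', hb'Y, hb'fin, hb'cov⟩ :=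
    hBcompact.elim_finite_subcover_image (fun y _ => isOpen_ball) hcover
  have key2 : ∃ δ > 0, ∀ y ∈ b', 1 < f y → 1 + δ ≤ f y := by
    set T := hb'fin.toFinset.filter (fun y => 1 < f y) with hTdef
    rcases T.eq_empty_or_nonempty with hTe | hTne
    · refine ⟨1, one_pos, fun y hy hfy => ?_⟩
      have : y ∈ T := Finset.mem_filter.2 ⟨hb'fin.mem_toFinset.2 hy, hfy⟩
      rw [hTe] at this
      exact absurd this (Finset.notMem_empty y)
    · refine ⟨T.inf' hTne (fun y => f y - 1), ?_, ?_⟩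
      · refine (Finset.lt_inf'_iff hTne).2 fun y hy => ?_
        have := (Finset.mem_filter.1 hy).2
        linarith
      · intro y hy hfy
        have hyT : y ∈ T := Finset.mem_filter.2 ⟨hb'fin.mem_toFinset.2 hy, hfy⟩
        have := Finset.inf'_le (fun y => f y - 1) hyT
        linarith
  obtain ⟨δ₂, hδ₂, hb'ge⟩ := key2
  set δ := min δ₁ δ₂ with hδdef
  have hδ : 0 < δ := lt_min hδ₁ hδ₂
  have hev := (Metric.tendstoUniformlyOn_iff.1 (hunif (Icc (-(k:ℝ)) k) isCompact_Icc)) δ hδ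
  filter_upwards [hev] with n hn
  set Bn := (({x : ℝ | fn n x < 1} ∩ Ioo (-(k:ℝ)) k)ᶜ ∩ Icc (-(k:ℝ)) k) with hBndef
  have hBnK : Bn ⊆ Icc (-(k:ℝ)) k := fun x hx => ((memB (fn n) x).1 hx).1
  -- Direction 1: every point of Bn is within r of B
  have h1 : ∀ x ∈ Bn, infDist x B ≤ r := by
    intro x hx
    by_contra h
    push_neg at h
    obtain ⟨hxK, hxcase⟩ := (memB (fn n) x).1 hx
    have hxC : x ∈ C := ⟨hxK, h.le⟩
    rcases hxcase with hfnx | hxIoo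
    · have hfle : f x ≤ 1 - δ₁ := hCle x hxC
      have hd := hn x hxK
      rw [Real.dist_eq, abs_lt] at hd
      have : δ ≤ δ₁ := min_le_left _ _
      linarith
    · have hend : x = -(k:ℝ) ∨ x = k := by
        rcases eq_or_lt_of_le hxK.1 with h1 | h1
        · exact Or.inl h1.symm
        · rcases eq_or_lt_of_le hxK.2 with h2 | h2
          · exact Or.inr h2
          · exact absurd ⟨h1, h2⟩ hxIoo
      have hxB : x ∈ B := by rcases hend with he | he <;> rw [he] <;> assumption
      have : infDist x B = 0 := infDist_zero_of_mem hxB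
      rw [this] at h
      linarith
  -- Direction 2: every point of B is within r of Bn
  have h2 : ∀ x ∈ B, infDist x Bn ≤ r := by
    intro x hx
    have := hb'cov hx
    simp only [mem_iUnion, exists_prop] at this
    obtain ⟨y, hyb', hyball⟩ := this
    have hyY : y ∈ Y := hb'Y hyb'
    obtain ⟨hyK, hycase⟩ := hyY
    have hyBn : y ∈ Bn := by
      refine (memB (fn n) y).2 ⟨hyK, ?_⟩
      rcases hycase with hfy | hend
      · left
        have hge : 1 + δ₂ ≤ f y := hb'ge y hyb' hfy
        have hd := hn y hyK
        rw [Real.dist_eq, abs_lt] at hd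
        have : δ ≤ δ₂ := min_le_right _ _
        linarith
      · right
        rcases hend with he | he <;> rw [he] <;> intro hmem
        · exact lt_irrefl _ hmem.1
        · exact lt_irrefl _ hmem.2
    calc infDist x Bn ≤ dist x y := infDist_le_dist_of_mem hyBn
      _ ≤ r := (mem_ball.1 hyball).le
  have hle : hausdorffDist Bn B ≤ r := hausdorffDist_le_of_infDist hr.le h1 h2
  have hnn : 0 ≤ hausdorffDist Bn B := hausdorffDist_nonneg
  rw [Real.dist_eq]
  rw [abs_of_nonneg (by simpa using hnn)]
  simp only [sub_zero]
  calc hausdorffDist Bn B ≤ r := hle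
    _ < ε := by rw [hrdef]; linarith
end

section
/- Let f : ℝ → [0,∞) be a continuous function such that the Lebesgue measure of {x ∈ ℝ : f(x) = 1} is zero. Suppose f_n : ℝ → [0,∞) is a sequence of continuous functions that converges to f uniformly on compacts. Then, for every K > 0, the Lebesgue measure of {x ∈ [−K, K] : f_n(x) < 1} converges, as n → ∞, to the Lebesgue measure of {x ∈ [−K, K] : f(x) < 1}. -/
open Filter MeasureTheory Set Topology

theorem stmt4
    (f : ℝ → ℝ) (fn : ℕ → ℝ → ℝ)
    (hf_cont : Continuous f) (hf_nonneg : ∀ x, 0 ≤ f x)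
    (hfn_cont : ∀ n, Continuous (fn n)) (hfn_nonneg : ∀ n x, 0 ≤ fn n x)
    (hleb : volume {x : ℝ | f x = 1} = 0)
    (hunif : ∀ K : Set ℝ, IsCompact K → TendstoUniformlyOn fn f atTop K)
    (K : ℝ) (hK : 0 < K) :
    Tendsto (fun n => volume {x ∈ Icc (-K) K | fn n x < 1}) atTop
      (nhds (volume {x ∈ Icc (-K) K | f x < 1})) := by
  have A_mble : MeasurableSet {x ∈ Icc (-K) K | f x < 1} :=
    measurableSet_Icc.inter (measurableSet_lt (hf_cont.measurable) measurable_const)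
  have As_mble : ∀ n, MeasurableSet {x ∈ Icc (-K) K | fn n x < 1} := fun n =>
    measurableSet_Icc.inter (measurableSet_lt ((hfn_cont n).measurable) measurable_const)
  refine tendsto_measure_of_ae_tendsto_indicator atTop A_mble As_mble
    (measurableSet_Icc : MeasurableSet (Icc (-K) K))
    (by simp [Real.volume_Icc]) (Eventually.of_forall fun n => inter_subset_left) ?_
  have hae : ∀ᵐ x : ℝ, f x ≠ 1 := by
    rw [ae_iff]
    simpa using hleb
  filter_upwards [hae] with x hx
  have hpt : Tendsto (fun n => fn n x) atTop (nhds (f x)) := by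
    have := hunif {x} isCompact_singleton
    have := (this.tendsto_at (mem_singleton x))
    simpa using this
  rcases lt_or_gt_of_ne hx with h1 | h1
  · have : ∀ᶠ n in atTop, fn n x < 1 := hpt.eventually_lt_const h1
    filter_upwards [this] with n hn
    simp [hn, h1]
  · have : ∀ᶠ n in atTop, 1 < fn n x := hpt.eventually_const_lt h1
    filter_upwards [this] with n hn
    constructor
    · rintro ⟨-, h⟩; exact absurd h (not_lt.2 hn.le)
    · rintro ⟨-, h⟩; exact absurd h (not_lt.2 h1.le)
end

section
/- Let f, f_n : [−1,1] → [0,∞) be continuous functions with f_n → f uniformly on [−1,1]. Assume f(0) = 0, the Lebesgue measure of {x ∈ [−1,1] : f(x) = 1} is zero, and there exist no s ∈ [−1,1] and ε > 0 such that f(s) = 1 and f(t) ≤ 1 for all t ∈ [s − ε, s + ε] ∩ [−1,1]. For x ∈ [−1,1] define g(x) = sup{y ∈ [−1, x] : f(y) ≥ 1} if this set is nonempty and g(x) = −1 otherwise; d(x) = inf{y ∈ [x, 1] : f(y) ≥ 1} if this set is nonempty and d(x) = 1 otherwise; and χ(x) = min( x − g(x), d(x) − x ). Define χ_n analogously from f_n.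 Then sup_{x ∈ [−1,1]} |χ_n(x) − χ(x)| → 0 as n → ∞. -/
open Filter MeasureTheory Set Topology


lemma lemA (K1 K2 : Set ℝ) (hK1 : IsClosed K1)
    (δ : ℝ) (hδ : 0 ≤ δ) (H : ∀ s ∈ K1, ∃ t ∈ K2, |t - s| ≤ δ)
    (x : ℝ) (hx : x ∈ Icc (-1:ℝ) 1) :
    min (x - sSup ({-1} ∪ (K2 ∩ Iic x))) (sInf ({1} ∪ (K2 ∩ Ici x)) - x)
      ≤ min (x - sSup ({-1} ∪ (K1 ∩ Iic x))) (sInf ({1} ∪ (K1 ∩ Ici x)) - x) + δ := by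
  obtain ⟨hx1, hx2⟩ := hx
  set S1 : Set ℝ := {-1} ∪ (K1 ∩ Iic x) with hS1
  set S2 : Set ℝ := {-1} ∪ (K2 ∩ Iic x) with hS2
  set T1 : Set ℝ := {1} ∪ (K1 ∩ Ici x) with hT1
  set T2 : Set ℝ := {1} ∪ (K2 ∩ Ici x) with hT2
  have hS1c : IsClosed S1 := isClosed_singleton.union (hK1.inter isClosed_Iic)
  have hS1ne : S1.Nonempty := ⟨-1, Or.inl rfl⟩
  have hS2ne : S2.Nonempty := ⟨-1, Or.inl rfl⟩
  have hT1c : IsClosed T1 := isClosed_singleton.union (hK1.inter isClosed_Ici)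
  have hT1ne : T1.Nonempty := ⟨1, Or.inl rfl⟩
  have hT2ne : T2.Nonempty := ⟨1, Or.inl rfl⟩
  have hS1b : BddAbove S1 := ⟨x, by rintro y (rfl | ⟨-, hy⟩); exacts [hx1, hy]⟩
  have hS2b : BddAbove S2 := ⟨x, by rintro y (rfl | ⟨-, hy⟩); exacts [hx1, hy]⟩
  have hT1b : BddBelow T1 := ⟨x, by rintro y (rfl | ⟨-, hy⟩); exacts [hx2, hy]⟩
  have hT2b : BddBelow T2 := ⟨x, by rintro y (rfl | ⟨-, hy⟩); exacts [hx2, hy]⟩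
  have hG1mem : sSup S1 ∈ S1 := hS1c.csSup_mem hS1ne hS1b
  have hD1mem : sInf T1 ∈ T1 := hT1c.csInf_mem hT1ne hT1b
  have hG2ge : (-1 : ℝ) ≤ sSup S2 := le_csSup hS2b (Or.inl rfl)
  have hD2le : sInf T2 ≤ 1 := csInf_le hT2b (Or.inl rfl)
  have hG1le : sSup S1 ≤ x := csSup_le hS1ne (by rintro y (rfl | ⟨-, hy⟩); exacts [hx1, hy])
  have hD1ge : x ≤ sInf T1 := le_csInf hT1ne (by rintro y (rfl | ⟨-, hy⟩); exacts [hx2, hy])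
  rw [← min_add_add_right]
  apply le_min
  · rcases hG1mem with h1 | ⟨hGK, hGx⟩
    · rw [mem_singleton_iff] at h1
      calc min (x - sSup S2) (sInf T2 - x) ≤ x - sSup S2 := min_le_left _ _
        _ ≤ x - sSup S1 + δ := by rw [h1]; linarith
    · obtain ⟨t, htK2, htd⟩ := H _ hGK
      rw [abs_le] at htd
      rcases le_or_gt t x with hle | hlt
      · have : t ≤ sSup S2 := le_csSup hS2b (Or.inr ⟨htK2, hle⟩)
        calc min (x - sSup S2) (sInf T2 - x) ≤ x - sSup S2 := min_le_left _ _
          _ ≤ x - sSup S1 + δ := by simp only [mem_Iic] at hGx; linarith [htd.1]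
      · have : sInf T2 ≤ t := csInf_le hT2b (Or.inr ⟨htK2, hlt.le⟩)
        calc min (x - sSup S2) (sInf T2 - x) ≤ sInf T2 - x := min_le_right _ _
          _ ≤ x - sSup S1 + δ := by simp only [mem_Iic] at hGx; linarith [htd.2]
  · rcases hD1mem with h1 | ⟨hDK, hDx⟩
    · rw [mem_singleton_iff] at h1
      calc min (x - sSup S2) (sInf T2 - x) ≤ sInf T2 - x := min_le_right _ _
        _ ≤ sInf T1 - x + δ := by rw [h1]; linarith
    · obtain ⟨t, htK2, htd⟩ := H _ hDK
      rw [abs_le] at htd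
      rcases le_or_gt x t with hle | hlt
      · have : sInf T2 ≤ t := csInf_le hT2b (Or.inr ⟨htK2, hle⟩)
        calc min (x - sSup S2) (sInf T2 - x) ≤ sInf T2 - x := min_le_right _ _
          _ ≤ sInf T1 - x + δ := by simp only [mem_Ici] at hDx; linarith [htd.2]
      · have : t ≤ sSup S2 := le_csSup hS2b (Or.inr ⟨htK2, hlt.le⟩)
        calc min (x - sSup S2) (sInf T2 - x) ≤ x - sSup S2 := min_le_left _ _
          _ ≤ sInf T1 - x + δ := by simp only [mem_Ici] at hDx; linarith [htd.1]


lemma lemB (f : ℝ → ℝ) (hf : ContinuousOn f (Icc (-1) 1))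
    (hnomax : ¬ ∃ (s ε : ℝ), s ∈ Icc (-1 : ℝ) 1 ∧ 0 < ε ∧ f s = 1 ∧
      ∀ t ∈ Icc (s - ε) (s + ε) ∩ Icc (-1 : ℝ) 1, f t ≤ 1)
    (δ : ℝ) (hδ : 0 < δ) :
    ∃ η > 0, ∀ s ∈ {y ∈ Icc (-1:ℝ) 1 | 1 ≤ f y}, ∃ t ∈ Icc (-1:ℝ) 1,
      |t - s| ≤ δ ∧ 1 + η ≤ f t := by
  push_neg at hnomax
  set K := {y ∈ Icc (-1:ℝ) 1 | 1 ≤ f y} with hK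
  have hKc : IsClosed K := by
    have : K = Icc (-1:ℝ) 1 ∩ f ⁻¹' (Ici 1) := by ext y; simp [hK, and_comm]
    rw [this]
    exact hf.preimage_isClosed_of_isClosed isClosed_Icc isClosed_Ici
  have hKcpt : IsCompact K := isCompact_Icc.of_isClosed_subset hKc (fun y hy => hy.1)
  have hpt : ∀ i : K, ∃ t ∈ Icc (-1:ℝ) 1, |t - (i:ℝ)| ≤ δ/2 ∧ 1 < f t := by
    rintro ⟨s, hsI, hsf⟩
    rcases lt_or_eq_of_le hsf with h | h
    · exact ⟨s, hsI, by simp [le_of_lt (half_pos hδ)], h⟩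
    · obtain ⟨t, ⟨ht1, ht2⟩, htf⟩ := hnomax s (δ/2) hsI (half_pos hδ) h.symm
      exact ⟨t, ht2, by rw [abs_le]; constructor <;> simp at ht1 <;> linarith [ht1.1, ht1.2], htf⟩
  choose t htI htd htf using hpt
  have hcover : K ⊆ ⋃ (i : K), Metric.ball (i : ℝ) (δ/2) := fun s hs =>
    mem_iUnion.2 ⟨⟨s, hs⟩, Metric.mem_ball_self (half_pos hδ)⟩
  obtain ⟨u, hu⟩ := hKcpt.elim_finite_subcover _ (fun i => Metric.isOpen_ball) hcover
  rcases u.eq_empty_or_nonempty with rfl | hune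
  · refine ⟨1, one_pos, fun s hs => absurd (hu hs) (by simp)⟩
  · refine ⟨u.inf' hune (fun i => f (t i) - 1), ?_, ?_⟩
    · rw [gt_iff_lt, Finset.lt_inf'_iff]
      exact fun i _ => sub_pos.2 (htf i)
    · intro s hs
      obtain ⟨i, hiu, hib⟩ := mem_iUnion₂.1 (hu hs)
      refine ⟨t i, htI i, ?_, ?_⟩
      · have h1 := htd i
        have h2 : |(i:ℝ) - s| < δ/2 := by
          rw [Metric.mem_ball, Real.dist_eq] at hib
          rwa [abs_sub_comm]
        calc |t i - s| ≤ |t i - (i:ℝ)| + |(i:ℝ) - s| := abs_sub_le _ _ _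
          _ ≤ δ/2 + δ/2 := add_le_add h1 h2.le
          _ = δ := by ring
      · have := Finset.inf'_le (fun i => f (t i) - 1) hiu
        linarith

lemma lemC (f : ℝ → ℝ) (hf : ContinuousOn f (Icc (-1) 1)) (δ : ℝ) (hδ : 0 < δ) :
    ∃ η > 0, ∀ x ∈ Icc (-1:ℝ) 1, 1 - η ≤ f x →
      ∃ s ∈ {y ∈ Icc (-1:ℝ) 1 | 1 ≤ f y}, |s - x| ≤ δ := by
  set K := {y ∈ Icc (-1:ℝ) 1 | 1 ≤ f y} with hK
  set C := Icc (-1:ℝ) 1 \ (⋃ s ∈ K, Metric.ball s δ) with hC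
  have hCf : ∀ c ∈ C, f c < 1 := by
    intro c hc
    by_contra h
    push_neg at h
    exact hc.2 (mem_iUnion₂.2 ⟨c, ⟨hc.1, h⟩, Metric.mem_ball_self hδ⟩)
  have key : ∃ η > 0, ∀ x ∈ Icc (-1:ℝ) 1, 1 - η ≤ f x → x ∉ C := by
    rcases C.eq_empty_or_nonempty with h | hCne
    · exact ⟨1, one_pos, fun x _ _ => by simp [h]⟩
    · have hCcpt : IsCompact C :=
        isCompact_Icc.of_isClosed_subset
          (isClosed_Icc.sdiff (isOpen_biUnion fun _ _ => Metric.isOpen_ball))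
          diff_subset
      obtain ⟨c0, hc0C, hc0max⟩ := hCcpt.exists_isMaxOn hCne (hf.mono diff_subset)
      refine ⟨(1 - f c0)/2, by linarith [hCf c0 hc0C], fun x _ hx hxC => ?_⟩
      have := hc0max hxC
      simp only [mem_upperBounds] at this
      have h2 : f x ≤ f c0 := this
      linarith [hCf c0 hc0C]
  obtain ⟨η, hη, hkey⟩ := key
  refine ⟨η, hη, fun x hxI hxf => ?_⟩
  have : x ∈ ⋃ s ∈ K, Metric.ball s δ := by
    by_contra h
    exact hkey x hxI hxf ⟨hxI, h⟩
  obtain ⟨s, hsK, hsb⟩ := mem_iUnion₂.1 this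
  rw [Metric.mem_ball, Real.dist_eq] at hsb
  exact ⟨s, hsK, by rw [abs_sub_comm] at hsb; exact hsb.le⟩

lemma isClosedLevel (f : ℝ → ℝ) (hf : ContinuousOn f (Icc (-1) 1)) :
    IsClosed {y ∈ Icc (-1:ℝ) 1 | 1 ≤ f y} := by
  have : {y ∈ Icc (-1:ℝ) 1 | 1 ≤ f y} = Icc (-1:ℝ) 1 ∩ f ⁻¹' (Ici 1) := by
    ext y; simp [and_comm]
  rw [this]
  exact hf.preimage_isClosed_of_isClosed isClosed_Icc isClosed_Ici

theorem stmt5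
    (f : ℝ → ℝ) (fn : ℕ → ℝ → ℝ)
    (hf_cont : ContinuousOn f (Icc (-1) 1))
    (hf_nonneg : ∀ x ∈ Icc (-1 : ℝ) 1, 0 ≤ f x)
    (hfn_cont : ∀ n, ContinuousOn (fn n) (Icc (-1) 1))
    (hfn_nonneg : ∀ n, ∀ x ∈ Icc (-1 : ℝ) 1, 0 ≤ fn n x)
    (hunif : TendstoUniformlyOn fn f atTop (Icc (-1) 1))
    (hf0 : f 0 = 0)
    (hleb : volume {x ∈ Icc (-1 : ℝ) 1 | f x = 1} = 0)
    (hnomax : ¬ ∃ (s ε : ℝ), s ∈ Icc (-1 : ℝ) 1 ∧ 0 < ε ∧ f s = 1 ∧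
      ∀ t ∈ Icc (s - ε) (s + ε) ∩ Icc (-1 : ℝ) 1, f t ≤ 1) :
    TendstoUniformlyOn
      (fun n x => min (x - sSup ({-1} ∪ {y ∈ Icc (-1 : ℝ) x | 1 ≤ fn n y}))
                      (sInf ({1} ∪ {y ∈ Icc x (1 : ℝ) | 1 ≤ fn n y}) - x))
      (fun x => min (x - sSup ({-1} ∪ {y ∈ Icc (-1 : ℝ) x | 1 ≤ f y}))
                    (sInf ({1} ∪ {y ∈ Icc x (1 : ℝ) | 1 ≤ f y}) - x))
      atTop (Icc (-1) 1) := by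
  rw [Metric.tendstoUniformlyOn_iff]
  intro ε hε
  obtain ⟨η1, hη1, hB⟩ := lemB f hf_cont hnomax (ε/2) (by positivity)
  obtain ⟨η2, hη2, hC⟩ := lemC f hf_cont (ε/2) (by positivity)
  have hev := (Metric.tendstoUniformlyOn_iff.mp hunif) (min η1 η2) (by positivity)
  filter_upwards [hev] with n hn x hx
  set K := {y ∈ Icc (-1:ℝ) 1 | 1 ≤ f y} with hKdef
  set Kn := {y ∈ Icc (-1:ℝ) 1 | 1 ≤ fn n y} with hKndef
  have hKc : IsClosed K := isClosedLevel f hf_cont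
  have hKnc : IsClosed Kn := isClosedLevel (fn n) (hfn_cont n)
  have H12 : ∀ s ∈ K, ∃ t ∈ Kn, |t - s| ≤ ε/2 := by
    intro s hs
    obtain ⟨t, htI, htd, htf⟩ := hB s hs
    have h1 := hn t htI
    rw [Real.dist_eq, abs_sub_lt_iff] at h1
    have : 1 ≤ fn n t := by
      have : min η1 η2 ≤ η1 := min_le_left _ _
      linarith [h1.1]
    exact ⟨t, ⟨htI, this⟩, htd⟩
  have H21 : ∀ t ∈ Kn, ∃ s ∈ K, |s - t| ≤ ε/2 := by
    rintro t ⟨htI, htf⟩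
    have h1 := hn t htI
    rw [Real.dist_eq, abs_sub_lt_iff] at h1
    have : 1 - η2 ≤ f t := by
      have : min η1 η2 ≤ η2 := min_le_right _ _
      linarith [h1.2]
    exact hC t htI this
  have e1 : {y ∈ Icc (-1 : ℝ) x | 1 ≤ f y} = K ∩ Iic x := by
    ext y
    simp only [hKdef, mem_setOf_eq, mem_inter_iff, mem_Icc, mem_Iic]
    constructor
    · rintro ⟨⟨a, b⟩, c⟩; exact ⟨⟨⟨a, b.trans hx.2⟩, c⟩, b⟩
    · rintro ⟨⟨⟨a, _⟩, c⟩, b⟩; exact ⟨⟨a, b⟩, c⟩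
  have e2 : {y ∈ Icc x (1 : ℝ) | 1 ≤ f y} = K ∩ Ici x := by
    ext y
    simp only [hKdef, mem_setOf_eq, mem_inter_iff, mem_Icc, mem_Ici]
    constructor
    · rintro ⟨⟨a, b⟩, c⟩; exact ⟨⟨⟨hx.1.trans a, b⟩, c⟩, a⟩
    · rintro ⟨⟨⟨_, b⟩, c⟩, a⟩; exact ⟨⟨a, b⟩, c⟩
  have e3 : {y ∈ Icc (-1 : ℝ) x | 1 ≤ fn n y} = Kn ∩ Iic x := by
    ext y
    simp only [hKndef, mem_setOf_eq, mem_inter_iff, mem_Icc, mem_Iic]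
    constructor
    · rintro ⟨⟨a, b⟩, c⟩; exact ⟨⟨⟨a, b.trans hx.2⟩, c⟩, b⟩
    · rintro ⟨⟨⟨a, _⟩, c⟩, b⟩; exact ⟨⟨a, b⟩, c⟩
  have e4 : {y ∈ Icc x (1 : ℝ) | 1 ≤ fn n y} = Kn ∩ Ici x := by
    ext y
    simp only [hKndef, mem_setOf_eq, mem_inter_iff, mem_Icc, mem_Ici]
    constructor
    · rintro ⟨⟨a, b⟩, c⟩; exact ⟨⟨⟨hx.1.trans a, b⟩, c⟩, a⟩
    · rintro ⟨⟨⟨_, b⟩, c⟩, a⟩; exact ⟨⟨a, b⟩, c⟩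
  simp only [e1, e2, e3, e4]
  rw [Real.dist_eq]
  have hA1 := lemA K Kn hKc (ε/2) (by positivity) H12 x hx
  have hA2 := lemA Kn K hKnc (ε/2) (by positivity) H21 x hx
  rw [abs_sub_lt_iff]
  constructor <;> linarith
end

section
/- Let f : [−1,1] → [0,∞) be continuous and suppose the Lebesgue measure of {x ∈ [−1,1] : f(x) = 1} is zero. For δ > 0 define E↑_δ = { x ∈ (−1,1) : there exists an open interval (a,b) ⊆ (−1,1) with x ∈ (a,b), b − a > δ, and f(y) > 1 for all y ∈ (a,b) }, and E↓_δ = { x ∈ (−1,1) : there exists an open interval (a,b) ⊆ (−1,1) with x ∈ (a,b), b − a > δ, and f(y) < 1 for all y ∈ (a,b) }. Then for every ε > 0 there exists δ > 0 such that the Lebesgue measure of E↑_δ ∪ E↓_δ is strictly greater than 2 − ε. -/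
open MeasureTheory Set

theorem stmt10
    (f : ℝ → ℝ) (hf_cont : ContinuousOn f (Icc (-1) 1))
    (hf_nonneg : ∀ x ∈ Icc (-1 : ℝ) 1, 0 ≤ f x)
    (hleb : volume {x ∈ Icc (-1 : ℝ) 1 | f x = 1} = 0) :
    ∀ ε > (0 : ℝ), ∃ δ > (0 : ℝ),
      volume
        ({x : ℝ | ∃ a b : ℝ, Ioo a b ⊆ Ioo (-1 : ℝ) 1 ∧ x ∈ Ioo a b ∧ δ < b - a ∧
            ∀ y ∈ Ioo a b, 1 < f y} ∪
         {x : ℝ | ∃ a b : ℝ, Ioo a b ⊆ Ioo (-1 : ℝ) 1 ∧ x ∈ Ioo a b ∧ δ < b - a ∧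
            ∀ y ∈ Ioo a b, f y < 1})
        > ENNReal.ofReal (2 - ε) := by
  intro ε hε
  set S : ℕ → Set ℝ := fun n =>
    {x : ℝ | ∃ a b : ℝ, Ioo a b ⊆ Ioo (-1 : ℝ) 1 ∧ x ∈ Ioo a b ∧ (1:ℝ)/(n+1) < b - a ∧
        ∀ y ∈ Ioo a b, 1 < f y} ∪
    {x : ℝ | ∃ a b : ℝ, Ioo a b ⊆ Ioo (-1 : ℝ) 1 ∧ x ∈ Ioo a b ∧ (1:ℝ)/(n+1) < b - a ∧
        ∀ y ∈ Ioo a b, f y < 1} with hSdef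
  have hmono : Monotone S := by
    intro m n hmn x hx
    have hc : (m:ℝ) ≤ (n:ℝ) := Nat.cast_le.mpr hmn
    have h : (1:ℝ)/(n+1) ≤ 1/(m+1) :=
      one_div_le_one_div_of_le (by positivity) (by linarith)
    rcases hx with ⟨a,b,h1,h2,h3,h4⟩ | ⟨a,b,h1,h2,h3,h4⟩
    · exact Or.inl ⟨a, b, h1, h2, h.trans_lt h3, h4⟩
    · exact Or.inr ⟨a, b, h1, h2, h.trans_lt h3, h4⟩
  have hmeas : ∀ n, MeasurableSet (S n) := by
    intro n
    have ho : IsOpen (S n) := by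
      rw [isOpen_iff_mem_nhds]
      rintro x (⟨a,b,h1,h2,h3,h4⟩ | ⟨a,b,h1,h2,h3,h4⟩)
      · exact Filter.mem_of_superset (Ioo_mem_nhds h2.1 h2.2)
          (fun y hy => Or.inl ⟨a, b, h1, hy, h3, h4⟩)
      · exact Filter.mem_of_superset (Ioo_mem_nhds h2.1 h2.2)
          (fun y hy => Or.inr ⟨a, b, h1, hy, h3, h4⟩)
    exact ho.measurableSet
  have hsub : {x ∈ Ioo (-1:ℝ) 1 | f x ≠ 1} ⊆ ⋃ n, S n := by
    rintro x ⟨hxI, hfx⟩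
    have hca : ContinuousAt f x :=
      hf_cont.continuousAt (Icc_mem_nhds hxI.1 hxI.2)
    rcases hfx.lt_or_gt with h | h
    · have hU : f ⁻¹' (Iio 1) ∩ Ioo (-1:ℝ) 1 ∈ nhds x :=
        Filter.inter_mem (hca (Iio_mem_nhds h)) (Ioo_mem_nhds hxI.1 hxI.2)
      obtain ⟨a, b, hab, habs⟩ := mem_nhds_iff_exists_Ioo_subset.mp hU
      obtain ⟨n, hn⟩ := exists_nat_one_div_lt (show (0:ℝ) < b - a by linarith [hab.1, hab.2])
      exact mem_iUnion.mpr ⟨n, Or.inr ⟨a, b, fun y hy => (habs hy).2, hab,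
        by exact_mod_cast hn, fun y hy => (habs hy).1⟩⟩
    · have hU : f ⁻¹' (Ioi 1) ∩ Ioo (-1:ℝ) 1 ∈ nhds x :=
        Filter.inter_mem (hca (Ioi_mem_nhds h)) (Ioo_mem_nhds hxI.1 hxI.2)
      obtain ⟨a, b, hab, habs⟩ := mem_nhds_iff_exists_Ioo_subset.mp hU
      obtain ⟨n, hn⟩ := exists_nat_one_div_lt (show (0:ℝ) < b - a by linarith [hab.1, hab.2])
      exact mem_iUnion.mpr ⟨n, Or.inl ⟨a, b, fun y hy => (habs hy).2, hab,
        by exact_mod_cast hn, fun y hy => (habs hy).1⟩⟩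
  have hT : volume {x ∈ Ioo (-1:ℝ) 1 | f x ≠ 1} = ENNReal.ofReal 2 := by
    have heq : {x ∈ Ioo (-1:ℝ) 1 | f x ≠ 1}
        = Ioo (-1:ℝ) 1 \ {x ∈ Icc (-1:ℝ) 1 | f x = 1} := by
      ext x
      simp only [mem_setOf_eq, mem_diff, mem_Ioo, mem_Icc]
      constructor
      · rintro ⟨h1, h2⟩
        exact ⟨h1, fun h => h2 h.2⟩
      · rintro ⟨h1, h2⟩
        exact ⟨h1, fun h => h2 ⟨⟨h1.1.le, h1.2.le⟩, h⟩⟩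
    rw [heq, measure_diff_null hleb, Real.volume_Ioo]
    norm_num
  have key : ENNReal.ofReal (2 - ε) < ⨆ n, volume (S n) := by
    have h1 : volume (⋃ n, S n) = ⨆ n, volume (S n) :=
      hmono.directed_le.measure_iUnion
    calc ENNReal.ofReal (2 - ε) < ENNReal.ofReal 2 :=
          (ENNReal.ofReal_lt_ofReal_iff (by norm_num)).mpr (by linarith)
      _ = volume {x ∈ Ioo (-1:ℝ) 1 | f x ≠ 1} := hT.symm
      _ ≤ volume (⋃ n, S n) := measure_mono hsub
      _ = ⨆ n, volume (S n) := h1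
  obtain ⟨n, hn⟩ := lt_iSup_iff.mp key
  exact ⟨(1:ℝ)/(n+1), by positivity, hn⟩
end
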